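/- arXiv:2002.09228 — 5 statements merged into one kernel-verified Lean document; each statement's English description precedes it below -/
import Mathlib

section
/- If t₁, …, tₙ are elements of a field F of characteristic p > 0 that form a separable transcendence basis of F over a subfield k, then the differentials dt₁, …, dtₙ are linearly independent in the F-vector space of absolute Kähler differentials Ω¹_{F/ℤ}. -/
open TrivSqZeroExt MvPolynomial

/-- A ring hom into the dual numbers over `F` whose first component is the structure map
yields a `ℤ`-derivation given by the second component. -/
noncomputable def derivOfDualHom {E F : Type*} [CommRing E] [CommRing F] [Algebra E F]
    (f : E →+* TrivSqZeroExt F F) (hf : ∀ x, (f x).fst = algebraMap E F x) :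
    Derivation ℤ E F where
  toLinearMap := AddMonoidHom.toIntLinearMap
    { toFun := fun x => (f x).snd
      map_zero' := by show (f 0).snd = 0; rw [map_zero, snd_zero]
      map_add' := fun x y => by
        show (f (x + y)).snd = (f x).snd + (f y).snd
        rw [map_add, snd_add] }
  map_one_eq_zero' := by
    show (f 1).snd = 0
    rw [map_one, snd_one]
  leibniz' a b := by
    show (f (a * b)).snd = a • (f b).snd + b • (f a).snd
    rw [map_mul, snd_mul, hf, hf]
    simp [MulOpposite.smul_eq_mul_unop, smul_eq_mul, Algebra.smul_def, mul_comm]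

lemma derivOfDualHom_apply {E F : Type*} [CommRing E] [CommRing F] [Algebra E F]
    (f : E →+* TrivSqZeroExt F F) (hf : ∀ x, (f x).fst = algebraMap E F x) (x : E) :
    derivOfDualHom f hf x = (f x).snd := rfl

/-- The ring hom into the dual numbers associated to a derivation. -/
noncomputable def dualHomOfDeriv {E F : Type*} [CommRing E] [CommRing F] [Algebra E F]
    (d : Derivation ℤ E F) : E →+* TrivSqZeroExt F F where
  toFun e := inl (algebraMap E F e) + inr (d e)
  map_one' := by apply TrivSqZeroExt.ext <;> simp
  map_mul' a b := by
    apply TrivSqZeroExt.ext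
    · simp only [fst_mul, fst_add, fst_inl, fst_inr, add_zero, map_mul]
    · simp only [snd_mul, snd_add, snd_inl, snd_inr, zero_add, fst_add, fst_inl, fst_inr,
        add_zero, map_mul, Derivation.leibniz, map_add, Algebra.smul_def, smul_eq_mul,
        MulOpposite.smul_eq_mul_unop, MulOpposite.unop_op, Algebra.algebraMap_self_apply]
      ring
  map_zero' := by apply TrivSqZeroExt.ext <;> simp
  map_add' a b := by apply TrivSqZeroExt.ext <;> simp [add_add_add_comm]

lemma dualHomOfDeriv_fst {E F : Type*} [CommRing E] [CommRing F] [Algebra E F]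
    (d : Derivation ℤ E F) (e : E) : (dualHomOfDeriv d e).fst = algebraMap E F e := by
  show (inl (algebraMap E F e) + inr (d e)).fst = _
  simp

lemma dualHomOfDeriv_snd {E F : Type*} [CommRing E] [CommRing F] [Algebra E F]
    (d : Derivation ℤ E F) (e : E) : (dualHomOfDeriv d e).snd = d e := by
  show (inl (algebraMap E F e) + inr (d e)).snd = _
  simp

universe u

/-- Any absolute derivation on `E` with values in `F` extends to `F`, provided `F`
is formally smooth over `E`. -/
theorem Derivation.exists_extension_of_formallySmooth {E F : Type u} [Field E] [Field F]
    [Algebra E F] [Algebra.FormallySmooth E F] (d : Derivation ℤ E F) :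
    ∃ D : Derivation ℤ F F, ∀ e : E, D (algebraMap E F e) = d e := by
  classical
  let I : Ideal (TrivSqZeroExt F F) := RingHom.ker (TrivSqZeroExt.fstHom F F F)
  have hmemI : ∀ x : TrivSqZeroExt F F, x ∈ I ↔ x.fst = 0 := fun x => RingHom.mem_ker
  have hI : I ^ 2 = ⊥ := by
    rw [pow_two, eq_bot_iff, Ideal.mul_le]
    intro a ha b hb
    rw [Ideal.mem_bot]
    have ha' : a.fst = 0 := (hmemI a).1 ha
    have hb' : b.fst = 0 := (hmemI b).1 hb
    apply TrivSqZeroExt.ext <;> simp [ha', hb']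
  letI : Algebra E (TrivSqZeroExt F F) := (dualHomOfDeriv d).toAlgebra
  have halgmap : ∀ e : E, algebraMap E (TrivSqZeroExt F F) e = dualHomOfDeriv d e :=
    fun _ => rfl
  letI : Algebra E (TrivSqZeroExt F F ⧸ I) := Ideal.Quotient.algebra E
  let τ : F →ₐ[E] (TrivSqZeroExt F F ⧸ I) :=
  { toRingHom := (Ideal.Quotient.mk I).comp (inlHom F F)
    commutes' := fun e => by
      show Ideal.Quotient.mk I (inl (algebraMap E F e)) = algebraMap E _ e
      have h2 : algebraMap E (TrivSqZeroExt F F ⧸ I) e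
          = Ideal.Quotient.mk I (dualHomOfDeriv d e) := rfl
      rw [h2, Ideal.Quotient.mk_eq_mk_iff_sub_mem, hmemI]
      simp [dualHomOfDeriv_fst] }
  obtain ⟨σ, hσ⟩ := Algebra.FormallySmooth.comp_surjective (R := E) (A := F) I hI τ
  have hfst : ∀ x : F, (σ x).fst = algebraMap F F x := by
    intro x
    have h3 : Ideal.Quotient.mk I (σ x) = Ideal.Quotient.mk I (inl x) := by
      have := AlgHom.congr_fun hσ x
      exact this
    rw [Ideal.Quotient.mk_eq_mk_iff_sub_mem, hmemI] at h3
    simpa [sub_eq_zero] using h3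
  refine ⟨derivOfDualHom σ.toRingHom hfst, fun e => ?_⟩
  have h4 : σ (algebraMap E F e) = dualHomOfDeriv d e := by
    rw [σ.commutes e, halgmap]
  show (σ (algebraMap E F e)).snd = d e
  rw [h4, dualHomOfDeriv_snd]

/-- If `t₁, …, tₙ ∈ F` form a separable transcendence basis of `F` over a subfield `k`
(i.e. they are algebraically independent over `k` and `F` is separable algebraic over
`k(t₁,…,tₙ)`), then the differentials `dt₁, …, dtₙ` are linearly independent in the
`F`-vector space of absolute Kähler differentials `Ω¹_{F/ℤ}`. -/
theorem stmt_0 (k F : Type*) [Field k] [Field F] [Algebra k F]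
    (p : ℕ) (hp : p.Prime) [CharP F p]
    (n : ℕ) (t : Fin n → F)
    (halg : AlgebraicIndependent k t)
    (hsep : Algebra.IsSeparable (IntermediateField.adjoin k (Set.range t)) F) :
    LinearIndependent F (fun i : Fin n => KaehlerDifferential.D ℤ F (t i)) := by
  classical
  set E := IntermediateField.adjoin k (Set.range t) with hE
  haveI : Algebra.FormallyEtale E F := Algebra.FormallyEtale.of_isSeparable E F
  rw [Fintype.linearIndependent_iff]
  intro c hc j
  have hinj := algebraicIndependent_iff_injective_aeval.2 halg
  -- the ring hom to dual numbers encoding ∂/∂X_j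
  let Φ : MvPolynomial (Fin n) k →+* TrivSqZeroExt F F :=
  { toFun := fun q => inl (aeval t q) + inr (aeval t (pderiv j q))
    map_one' := by apply TrivSqZeroExt.ext <;> simp
    map_mul' := fun q r => by
      apply TrivSqZeroExt.ext
      · simp only [fst_mul, fst_add, fst_inl, fst_inr, add_zero, map_mul]
      · simp only [snd_mul, snd_add, snd_inl, snd_inr, zero_add, fst_add, fst_inl, fst_inr,
          add_zero, map_mul, Derivation.leibniz, map_add, Algebra.smul_def, smul_eq_mul,
          MulOpposite.smul_eq_mul_unop, MulOpposite.unop_op, Algebra.algebraMap_self_apply]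
        ring
    map_zero' := by apply TrivSqZeroExt.ext <;> simp
    map_add' := fun q r => by
      apply TrivSqZeroExt.ext
      · simp only [fst_add, fst_inl, fst_inr, add_zero, map_add]
      · simp only [snd_add, snd_inl, snd_inr, zero_add, map_add] }
  have hΦfst : ∀ q, (Φ q).fst = aeval t q := fun q => by
    show (inl (aeval t q) + inr (aeval t (pderiv j q))).fst = _
    simp
  have hΦsnd : ∀ q, (Φ q).snd = aeval t (pderiv j q) := fun q => by
    show (inl (aeval t q) + inr (aeval t (pderiv j q))).snd = _
    simp
  have hu : ∀ w : nonZeroDivisors (MvPolynomial (Fin n) k), IsUnit (Φ w) := by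
    rintro ⟨w, hw⟩
    rw [isUnit_iff_isUnit_fst, hΦfst, isUnit_iff_ne_zero]
    intro h0
    have hw0 : (w : MvPolynomial (Fin n) k) = 0 := hinj (by simpa using h0)
    exact (mem_nonZeroDivisors_iff_ne_zero.1 hw) hw0
  let Φ' : FractionRing (MvPolynomial (Fin n) k) →+* TrivSqZeroExt F F :=
    IsLocalization.lift (M := nonZeroDivisors (MvPolynomial (Fin n) k)) hu
  have hΦ' : ∀ q, Φ' (algebraMap _ _ q) = Φ q := fun q => IsLocalization.lift_eq hu q
  let Ψ : E →+* TrivSqZeroExt F F := Φ'.comp halg.aevalEquivField.symm.toAlgHom.toRingHom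
  have hΨ : ∀ e : E, Ψ e = Φ' (halg.aevalEquivField.symm e) := fun _ => rfl
  have hcomp : (TrivSqZeroExt.fstHom F F F).toRingHom.comp Φ'
      = IsFractionRing.lift hinj := by
    apply IsLocalization.ringHom_ext (nonZeroDivisors (MvPolynomial (Fin n) k))
    apply RingHom.ext
    intro q
    simp only [RingHom.comp_apply, hΦ', AlgHom.toRingHom_eq_coe, RingHom.coe_coe]
    rw [IsFractionRing.lift_algebraMap]
    show (Φ q).fst = _
    rw [hΦfst]
    rfl
  have hΨfst : ∀ e : E, (Ψ e).fst = algebraMap E F e := by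
    intro e
    have h1 : (Ψ e).fst = IsFractionRing.lift hinj (halg.aevalEquivField.symm e) :=
      congrArg (fun f => f (halg.aevalEquivField.symm e)) hcomp
    rw [h1]
    have h2 := halg.aevalEquivField_apply_coe (halg.aevalEquivField.symm e)
    rw [AlgEquiv.apply_symm_apply] at h2
    exact h2.symm
  let d : Derivation ℤ E F := derivOfDualHom Ψ hΨfst
  obtain ⟨D, hD⟩ := Derivation.exists_extension_of_formallySmooth d
  have htE : ∀ i, t i ∈ E := fun i => IntermediateField.subset_adjoin k _ ⟨i, rfl⟩
  have hsymm : ∀ i, halg.aevalEquivField.symm ⟨t i, htE i⟩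
      = algebraMap (MvPolynomial (Fin n) k) (FractionRing (MvPolynomial (Fin n) k)) (X i) := by
    intro i
    rw [AlgEquiv.symm_apply_eq]
    apply Subtype.ext
    rw [halg.aevalEquivField_algebraMap_apply_coe]
    simp
  have hDt : ∀ i, D (t i) = if i = j then 1 else 0 := by
    intro i
    have h5 : t i = algebraMap E F ⟨t i, htE i⟩ := rfl
    rw [h5, hD ⟨t i, htE i⟩]
    show (Ψ ⟨t i, htE i⟩).snd = _
    rw [hΨ, hsymm i, hΦ', hΦsnd]
    rcases eq_or_ne i j with rfl | hne
    · simp [pderiv_X_self]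
    · simp [pderiv_X_of_ne hne, hne]
  have hfin := congrArg D.liftKaehlerDifferential hc
  simp only [map_sum, map_smul, Derivation.liftKaehlerDifferential_comp_D, map_zero,
    smul_eq_mul, hDt, mul_ite, mul_one, mul_zero, Finset.sum_ite_eq', Finset.mem_univ,
    if_true] at hfin
  exact hfin
end

section
/- Let F ⊆ E be a separable field extension in characteristic p > 0. If t₁, …, tₙ ∈ F have linearly independent differentials dt₁, …, dtₙ in Ω¹_{F/ℤ}, then their images in E have linearly independent differentials in Ω¹_{E/ℤ}. -/
open TensorProduct in
/-- A (not necessarily algebraic) field extension `F ⊆ E` is separable if `K ⊗_F E` is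
reduced for every field extension `K` of `F` (MacLane's criterion). -/
def IsSeparableFieldExt (F : Type u) (E : Type v) [Field F] [Field E] [Algebra F E] : Prop :=
  ∀ (K : Type u) [Field K] [Algebra F K], IsReduced (K ⊗[F] E)


theorem deriv_prod_pow {R L M : Type*} [CommRing R] [CommRing L] [Algebra R L]
    [AddCommGroup M] [Module L M] [Module R M] (D : Derivation R L M)
    {ι : Type*} [DecidableEq ι] (t : ι → L) (a : ι → ℕ) (s : Finset ι) :
    D (∏ i ∈ s, t i ^ a i) =
      ∑ i ∈ s, ((a i : L) * (t i ^ (a i - 1) * ∏ i' ∈ s.erase i, t i' ^ a i')) • D (t i) := by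
  classical
  induction s using Finset.induction_on with
  | empty => simp
  | @insert j s' hj ih =>
    rw [Finset.prod_insert hj, Derivation.leibniz, ih, Finset.sum_insert hj, Finset.smul_sum,
      add_comm]
    congr 1
    · rw [Derivation.leibniz_pow, Finset.erase_insert hj, ← Nat.cast_smul_eq_nsmul L,
        smul_smul, smul_smul]
      congr 1
      ring
    · refine Finset.sum_congr rfl fun i hi => ?_
      rw [smul_smul]
      congr 1
      rw [Finset.erase_insert_of_ne (fun h : j = i => hj (h.symm ▸ hi)),
        Finset.prod_insert (fun h => hj (Finset.mem_of_mem_erase h))]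
      ring

theorem pIndep_of_li {p : ℕ} (hp : p.Prime) {L : Type*} [Field L] [CharP L p]
    {n : ℕ} (t : Fin n → L)
    (hli : LinearIndependent L fun i : Fin n => KaehlerDifferential.D ℤ L (t i))
    (c : (Fin n → Fin p) → L)
    (hrel : ∑ α : Fin n → Fin p, c α ^ p * ∏ i, t i ^ (α i : ℕ) = 0) : ∀ α, c α = 0 := by
  classical
  haveI : Fact p.Prime := ⟨hp⟩
  haveI : ExpChar L p := ExpChar.prime hp
  have cast_pow : ∀ k : ℕ, ((k : L)) ^ p = (k : L) := fun k => by
    have h := map_natCast (frobenius L p) k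
    rwa [frobenius_def] at h
  have final : ∀ c : (Fin n → Fin p) → L,
      (∑ α : Fin n → Fin p, c α ^ p * ∏ i, t i ^ (α i : ℕ) = 0) →
      (∀ α, (∃ i, (α i : ℕ) ≠ 0) → c α = 0) → ∀ α, c α = 0 := by
    intro c hrel hne α
    by_cases hα : ∃ i, (α i : ℕ) ≠ 0
    · exact hne α hα
    push_neg at hα
    have h1 : ∑ β : Fin n → Fin p, c β ^ p * ∏ i, t i ^ (β i : ℕ)
        = c α ^ p * ∏ i, t i ^ (α i : ℕ) := by
      refine Fintype.sum_eq_single α fun β hβ => ?_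
      have hcβ : c β = 0 := by
        refine hne β ?_
        by_contra h
        push_neg at h
        exact hβ (funext fun i => Fin.ext (by rw [h i, hα i]))
      rw [hcβ, zero_pow hp.ne_zero, zero_mul]
    have h2 : c α ^ p * ∏ i, t i ^ (α i : ℕ) = 0 := by rw [← h1, hrel]
    rw [Finset.prod_eq_one (fun i _ => by rw [hα i, pow_zero]), mul_one] at h2
    exact pow_eq_zero_iff hp.ne_zero |>.mp h2
  suffices main : ∀ (d : ℕ) (c : (Fin n → Fin p) → L),
      (∀ α, c α ≠ 0 → ∑ i, (α i : ℕ) ≤ d) →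
      (∑ α : Fin n → Fin p, c α ^ p * ∏ i, t i ^ (α i : ℕ) = 0) → ∀ α, c α = 0 by
    refine main (n * p) c (fun α _ => ?_) hrel
    calc ∑ i, (α i : ℕ) ≤ ∑ _i : Fin n, p :=
          Finset.sum_le_sum fun i _ => le_of_lt (α i).isLt
    _ = n * p := by rw [Finset.sum_const, Finset.card_univ, Fintype.card_fin, smul_eq_mul]
  intro d
  induction d with
  | zero =>
    intro c hb hrel
    refine final c hrel fun α ⟨i, hi⟩ => ?_
    by_contra h
    exact hi (Finset.sum_eq_zero_iff.mp (Nat.le_zero.mp (hb α h)) i (Finset.mem_univ i))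
  | succ d ih =>
    intro c hb hrel
    set D := KaehlerDifferential.D ℤ L with hD
    have Dp0 : ∀ x : L, D (x ^ p) = 0 := fun x => by
      rw [Derivation.leibniz_pow, ← Nat.cast_smul_eq_nsmul L, CharP.cast_eq_zero, zero_smul]
    have hg : ∀ i : Fin n,
        (∑ α : Fin n → Fin p, c α ^ p *
          ((α i : ℕ) * (t i ^ ((α i : ℕ) - 1) * ∏ i' ∈ Finset.univ.erase i, t i' ^ (α i' : ℕ)))) = 0 := by
      have h0 : (0 : Ω[L⁄ℤ]) = ∑ i : Fin n, (∑ α : Fin n → Fin p, c α ^ p *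
          ((α i : ℕ) * (t i ^ ((α i : ℕ) - 1) * ∏ i' ∈ Finset.univ.erase i, t i' ^ (α i' : ℕ)))) • D (t i) := by
        calc (0 : Ω[L⁄ℤ]) = D 0 := (map_zero D).symm
        _ = D (∑ α : Fin n → Fin p, c α ^ p * ∏ i, t i ^ (α i : ℕ)) := by rw [hrel]
        _ = ∑ α : Fin n → Fin p, (c α ^ p • D (∏ i, t i ^ (α i : ℕ))
              + (∏ i, t i ^ (α i : ℕ)) • D (c α ^ p)) := by
            rw [map_sum]; exact Finset.sum_congr rfl fun α _ => D.leibniz _ _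
        _ = ∑ α : Fin n → Fin p, ∑ i : Fin n, (c α ^ p *
              ((α i : ℕ) * (t i ^ ((α i : ℕ) - 1) * ∏ i' ∈ Finset.univ.erase i, t i' ^ (α i' : ℕ)))) • D (t i) := by
            refine Finset.sum_congr rfl fun α _ => ?_
            rw [Dp0, smul_zero, add_zero, deriv_prod_pow, Finset.smul_sum]
            exact Finset.sum_congr rfl fun i _ => (smul_smul _ _ _)
        _ = _ := by
            rw [Finset.sum_comm]
            exact Finset.sum_congr rfl fun i _ => (Finset.sum_smul).symm
      intro i
      exact (Fintype.linearIndependent_iff.mp hli _ h0.symm) i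
    have hvanish : ∀ (i : Fin n) (α : Fin n → Fin p), 0 < (α i : ℕ) → c α = 0 := by
      intro i
      set down : (Fin n → Fin p) → (Fin n → Fin p) :=
        fun α => Function.update α i ⟨(α i : ℕ) - 1,
          lt_of_le_of_lt (Nat.sub_le _ _) (α i).isLt⟩ with hdown
      set up : (Fin n → Fin p) → (Fin n → Fin p) :=
        fun β => if h : (β i : ℕ) + 1 < p then Function.update β i ⟨(β i : ℕ) + 1, h⟩ else β
        with hup
      set c' : (Fin n → Fin p) → L := fun β =>
        if h : (β i : ℕ) + 1 < p then
          (((β i : ℕ) + 1 : ℕ) : L) * c (Function.update β i ⟨(β i : ℕ) + 1, h⟩) else 0 with hc'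
      have hdvi : ∀ α : Fin n → Fin p, ((down α) i : ℕ) = (α i : ℕ) - 1 := fun α => by
        simp [hdown]
      have hdv' : ∀ (α : Fin n → Fin p) (i' : Fin n), i' ≠ i → (down α) i' = α i' := fun α i' h => by
        simp only [hdown]; exact Function.update_of_ne h _ _
      have hud : ∀ α : Fin n → Fin p, 0 < (α i : ℕ) →
          ∀ h : ((down α) i : ℕ) + 1 < p, Function.update (down α) i ⟨((down α) i : ℕ) + 1, h⟩ = α := by
        intro α h0 h
        funext i'
        by_cases hi' : i' = i
        · subst hi'
          rw [Function.update_self]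
          refine Fin.ext ?_
          simp only [hdvi]
          omega
        · rw [Function.update_of_ne hi', hdv' α i' hi']
      have hcond : ∀ α : Fin n → Fin p, 0 < (α i : ℕ) → ((down α) i : ℕ) + 1 < p := by
        intro α h0
        have := (α i).isLt
        rw [hdvi]; omega
      have hc'down : ∀ α : Fin n → Fin p, 0 < (α i : ℕ) →
          c' (down α) = ((α i : ℕ) : L) * c α := by
        intro α h0
        simp only [hc']
        rw [dif_pos (hcond α h0), hud α h0 (hcond α h0)]
        have hnat : ((down α) i : ℕ) + 1 = (α i : ℕ) := by rw [hdvi]; omega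
        rw [hnat]
      -- the new relation
      have hrel' : ∑ β : Fin n → Fin p, c' β ^ p * ∏ i', t i' ^ (β i' : ℕ) = 0 := by
        rw [← hg i]
        rw [← Finset.sum_filter_of_ne (s := Finset.univ)
          (p := fun β : Fin n → Fin p => (β i : ℕ) + 1 < p)
          (fun β _ hβ => by
            by_contra hcnd
            apply hβ
            simp only [hc']
            rw [dif_neg hcnd, zero_pow hp.ne_zero, zero_mul]),
          ← Finset.sum_filter_of_ne (s := Finset.univ)
          (p := fun α : Fin n → Fin p => 0 < (α i : ℕ))
          (f := fun α : Fin n → Fin p => c α ^ p *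
            ((α i : ℕ) * (t i ^ ((α i : ℕ) - 1) * ∏ i' ∈ Finset.univ.erase i, t i' ^ (α i' : ℕ))))
          (fun α _ hα => by
            by_contra hcnd
            apply hα
            simp only [not_lt, Nat.le_zero] at hcnd
            simp only [hcnd, Nat.cast_zero, zero_mul, mul_zero])]
        refine (Finset.sum_nbij' down up ?_ ?_ ?_ ?_ ?_).symm
        · intro α hα
          rw [Finset.mem_filter] at hα ⊢
          exact ⟨Finset.mem_univ _, hcond α hα.2⟩
        · intro β hβ
          rw [Finset.mem_filter] at hβ ⊢
          refine ⟨Finset.mem_univ _, ?_⟩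
          simp only [hup]
          rw [dif_pos hβ.2, Function.update_self]
          exact Nat.succ_pos _
        · intro α hα
          rw [Finset.mem_filter] at hα
          simp only [hup]
          rw [dif_pos (hcond α hα.2)]
          exact hud α hα.2 (hcond α hα.2)
        · intro β hβ
          rw [Finset.mem_filter] at hβ
          funext i'
          by_cases hi' : i' = i
          · subst hi'
            refine Fin.ext ?_
            rw [hdvi]
            simp only [hup]
            rw [dif_pos hβ.2, Function.update_self]
            simp
          · rw [hdv' _ _ hi']
            simp only [hup]
            rw [dif_pos hβ.2]
            exact Function.update_of_ne hi' _ _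
        · intro α hα
          rw [Finset.mem_filter] at hα
          rw [hc'down α hα.2, mul_pow, cast_pow]
          have hmon : ∏ i', t i' ^ ((down α) i' : ℕ)
              = t i ^ ((α i : ℕ) - 1) * ∏ i' ∈ Finset.univ.erase i, t i' ^ (α i' : ℕ) := by
            rw [← Finset.mul_prod_erase Finset.univ _ (Finset.mem_univ i), hdvi]
            congr 1
            exact Finset.prod_congr rfl fun i' hi' =>
              by rw [hdv' α i' (Finset.ne_of_mem_erase hi')]
          rw [hmon]
          ring
      -- bound for the induction
      have hb' : ∀ β : Fin n → Fin p, c' β ≠ 0 → ∑ i', (β i' : ℕ) ≤ d := by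
        intro β hβ
        simp only [hc'] at hβ
        by_cases hcnd : (β i : ℕ) + 1 < p
        · rw [dif_pos hcnd] at hβ
          have hcne : c (Function.update β i ⟨(β i : ℕ) + 1, hcnd⟩) ≠ 0 :=
            fun h => hβ (by rw [h, mul_zero])
          have hle := hb _ hcne
          have hsum : ∑ i', ((Function.update β i ⟨(β i : ℕ) + 1, hcnd⟩) i' : ℕ)
              = ((β i : ℕ) + 1) + ∑ i' ∈ Finset.univ.erase i, (β i' : ℕ) := by
            rw [← Finset.add_sum_erase Finset.univ _ (Finset.mem_univ i), Function.update_self]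
            congr 1
            exact Finset.sum_congr rfl fun i' hi' =>
              by rw [Function.update_of_ne (Finset.ne_of_mem_erase hi')]
          have hsumβ : ∑ i', (β i' : ℕ)
              = (β i : ℕ) + ∑ i' ∈ Finset.univ.erase i, (β i' : ℕ) :=
            (Finset.add_sum_erase Finset.univ _ (Finset.mem_univ i)).symm
          omega
        · exact absurd (dif_neg hcnd) hβ
      have hall := ih c' hb' hrel'
      intro α h0
      have := hall (down α)
      rw [hc'down α h0] at this
      rcases mul_eq_zero.mp this with h | h
      · exfalso
        have hne : ¬ (p ∣ (α i : ℕ)) := Nat.not_dvd_of_pos_of_lt h0 (α i).isLt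
        exact hne ((CharP.cast_eq_zero_iff L p _).mp h)
      · exact h
    refine final c hrel fun α ⟨i, hi⟩ => hvanish i α (Nat.pos_of_ne_zero hi)


set_option maxHeartbeats 1000000 in
/-- A Frobenius-twisted copy of a field. -/
def FrobTwist (F : Type u) : Type u := F

instance (F : Type u) [Field F] : Field (FrobTwist F) := ‹Field F›

set_option maxHeartbeats 1000000 in
open TensorProduct in
theorem pIndep_map {F : Type u} {E : Type v} [Field F] [Field E] [Algebra F E] {p : ℕ}
    (hp : p.Prime) [CharP F p] (hsep : IsSeparableFieldExt F E) {ι : Type*} [Fintype ι]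
    (x : ι → F) (hx : ∀ c : ι → F, ∑ k, c k ^ p * x k = 0 → ∀ k, c k = 0)
    (c : ι → E) (hc : ∑ k, c k ^ p * algebraMap F E (x k) = 0) : ∀ k, c k = 0 := by
  intro k0
  haveI : Fact p.Prime := ⟨hp⟩
  haveI : ExpChar F p := ExpChar.prime hp
  letI : Algebra F (FrobTwist F) := (frobenius F p).toAlgebra
  have halg : ∀ a : F, algebraMap F (FrobTwist F) a = (a ^ p : F) := fun a => by
    exact frobenius_def p a
  have hred : IsReduced ((FrobTwist F) ⊗[F] E) := hsep (FrobTwist F)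
  haveI hTred : IsReduced (E ⊗[F] (FrobTwist F)) :=
    isReduced_of_injective (Algebra.TensorProduct.comm F E (FrobTwist F))
      (Algebra.TensorProduct.comm F E (FrobTwist F)).injective
  -- the family x, viewed in FrobTwist F, is linearly independent over F
  set xK : ι → FrobTwist F := fun k => (x k : F) with hxK_def
  have hxK : LinearIndependent F xK := by
    rw [Fintype.linearIndependent_iff]
    intro g hg
    apply hx g
    calc ∑ k, g k ^ p * x k = (∑ k, g k • xK k : F) := by
          refine Finset.sum_congr rfl fun k _ => ?_
          rw [Algebra.smul_def, halg]; rfl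
    _ = 0 := hg
  have hxKinj : Function.Injective xK := hxK.injective
  have hset : LinearIndepOn F id (Set.range xK) :=
    (linearIndepOn_id_range_iff hxKinj).mpr hxK
  let bK := Module.Basis.extend hset
  let bT := bK.baseChange E
  have hsub : Set.range xK ⊆ hset.extend (Set.subset_univ _) :=
    hset.subset_extend _
  let κ : ι → ↑(hset.extend (Set.subset_univ _)) := fun k => ⟨xK k, hsub ⟨k, rfl⟩⟩
  have hκ : Function.Injective κ := fun a b hab => hxKinj (congrArg Subtype.val hab)
  have hbT : ∀ k, bT (κ k) = (1 : E) ⊗ₜ[F] xK k := fun k => by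
    rw [Module.Basis.baseChange_apply, Module.Basis.extend_apply_self]
  have hliT : LinearIndependent E (fun k => (1 : E) ⊗ₜ[F] xK k) := by
    have h1 := bT.linearIndependent.comp κ hκ
    have h2 : (⇑bT ∘ κ) = fun k => (1:E) ⊗ₜ[F] xK k := funext fun k => hbT k
    rwa [h2] at h1
  -- the element z
  set z : E ⊗[F] (FrobTwist F) := ∑ k, c k ⊗ₜ[F] xK k with hz_def
  haveI : CharP E p := charP_of_injective_algebraMap (algebraMap F E).injective p
  haveI : Nontrivial (E ⊗[F] (FrobTwist F)) := nontrivial_of_ne _ _ (bT.ne_zero (κ k0))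
  haveI : CharP (E ⊗[F] (FrobTwist F)) p :=
    charP_of_injective_algebraMap (algebraMap E (E ⊗[F] (FrobTwist F))).injective p
  haveI : ExpChar (E ⊗[F] (FrobTwist F)) p := ExpChar.prime hp
  have hzp : z ^ p = 0 := by
    rw [hz_def, sum_pow_char]
    have : ∀ k : ι, (c k ⊗ₜ[F] xK k) ^ p = (algebraMap F E (x k) * c k ^ p) ⊗ₜ[F] (1 : FrobTwist F) := by
      intro k
      rw [Algebra.TensorProduct.tmul_pow]
      have : (xK k) ^ p = algebraMap F (FrobTwist F) (x k) := (halg (x k)).symm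
      rw [this, Algebra.algebraMap_eq_smul_one, tmul_smul, smul_tmul', Algebra.smul_def]
    rw [Finset.sum_congr rfl fun k _ => this k, ← sum_tmul]
    have : ∑ k, algebraMap F E (x k) * c k ^ p = 0 := by
      rw [← hc]; exact Finset.sum_congr rfl fun k _ => mul_comm _ _
    rw [this, zero_tmul]
  have hz0 : z = 0 := hTred.eq_zero z ⟨p, hzp⟩
  have : ∑ k, c k • ((1:E) ⊗ₜ[F] xK k) = 0 := by
    rw [← hz0, hz_def]
    exact Finset.sum_congr rfl fun k _ => by rw [smul_tmul', smul_eq_mul, mul_one]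
  exact Fintype.linearIndependent_iff.mp hliT c this k0

set_option maxHeartbeats 2000000 in
set_option synthInstance.maxHeartbeats 1000000 in
open Polynomial in
/-- If `F ⊆ E` is a separable field extension in characteristic `p > 0` and
`t₁, …, tₙ ∈ F` have linearly independent differentials in `Ω¹_{F/ℤ}`, then their images
in `E` have linearly independent differentials in `Ω¹_{E/ℤ}`. -/
theorem stmt_3 (F : Type u) (E : Type v) [Field F] [Field E] [Algebra F E]
    (p : ℕ) (hp : p.Prime) [CharP F p]
    (hsep : IsSeparableFieldExt F E)
    (n : ℕ) (t : Fin n → F)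
    (hli : LinearIndependent F (fun i : Fin n => KaehlerDifferential.D ℤ F (t i))) :
    LinearIndependent E (fun i : Fin n => KaehlerDifferential.D ℤ E (algebraMap F E (t i))) := by
  classical
  haveI : Fact p.Prime := ⟨hp⟩
  haveI : ExpChar F p := ExpChar.prime hp
  haveI : CharP E p := charP_of_injective_algebraMap (algebraMap F E).injective p
  haveI : ExpChar E p := ExpChar.prime hp
  set t' : Fin n → E := fun i => algebraMap F E (t i) with ht'
  -- p-independence of reduced monomials in E
  have hmonE : ∀ c : (Fin n → Fin p) → E,
      ∑ α : Fin n → Fin p, c α ^ p * ∏ i, t' i ^ (α i : ℕ) = 0 → ∀ α, c α = 0 := by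
    intro c hc
    refine pIndep_map hp hsep (fun α : Fin n → Fin p => ∏ i, t i ^ (α i : ℕ))
      (pIndep_of_li hp t hli) c ?_
    rw [← hc]
    refine Finset.sum_congr rfl fun α _ => ?_
    rw [map_prod]
    congr 1
    exact Finset.prod_congr rfl fun i _ => map_pow _ _ _
  rw [Fintype.linearIndependent_iff]
  intro g hg j
  set monE : (Fin n → Fin p) → E := fun α => ∏ i, t' i ^ (α i : ℕ) with hmonE_def
  -- the subfield of p-th powers
  set pE : Subfield E := (frobenius E p).fieldRange with hpE
  have hppow : ∀ x : E, x ^ p ∈ pE := fun x =>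
    RingHom.mem_fieldRange.mpr ⟨x, frobenius_def p x⟩
  have hintpE : ∀ x : E, IsIntegral pE x := by
    intro x
    refine ⟨X ^ p - C (⟨x ^ p, hppow x⟩ : pE), monic_X_pow_sub_C _ hp.ne_zero, ?_⟩
    rw [eval₂_sub, eval₂_X_pow, eval₂_C]
    exact sub_self _
  -- linear independence of monomials over pE
  have hliMon : LinearIndependent pE monE := by
    rw [Fintype.linearIndependent_iff]
    intro gc hgc
    have hex : ∀ α : Fin n → Fin p, ∃ y : E, y ^ p = ((gc α : E)) := fun α => by
      obtain ⟨y, hy⟩ := RingHom.mem_fieldRange.mp (gc α).2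
      exact ⟨y, by rw [← frobenius_def p y]; exact hy⟩
    choose y hy using hex
    have hrel : ∑ α : Fin n → Fin p, y α ^ p * monE α = 0 := by
      rw [← hgc]
      exact Finset.sum_congr rfl fun α _ => by rw [hy, Algebra.smul_def]; rfl
    intro α
    have := hmonE y hrel α
    exact Subtype.ext (by rw [← hy α, this, zero_pow hp.ne_zero]; rfl)
  -- the span of monomials omitting j
  set MS : Set E := monE '' {α | (α j : ℕ) = 0} with hMS
  have hmulmem : ∀ x ∈ MS, ∀ z ∈ MS, x * z ∈ Submodule.span pE MS := by
    rintro _ ⟨α, hα, rfl⟩ _ ⟨β, hβ, rfl⟩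
    set q : Fin n → ℕ := fun i => ((α i : ℕ) + (β i : ℕ)) / p with hq
    set r : Fin n → Fin p := fun i => ⟨((α i : ℕ) + (β i : ℕ)) % p, Nat.mod_lt _ hp.pos⟩ with hr
    have hprod : monE α * monE β = ((∏ i, t' i ^ q i) ^ p) * monE r := by
      rw [hmonE_def]
      simp only []
      rw [← Finset.prod_mul_distrib, ← Finset.prod_pow, ← Finset.prod_mul_distrib]
      refine Finset.prod_congr rfl fun i _ => ?_
      rw [← pow_add, ← pow_mul, ← pow_add]
      congr 1
      have h1 : (r i : ℕ) = ((α i : ℕ) + (β i : ℕ)) % p := rfl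
      have h2 : q i = ((α i : ℕ) + (β i : ℕ)) / p := rfl
      rw [h2]
      exact (Nat.div_add_mod' _ _).symm
    rw [hprod]
    have hmem : ((∏ i, t' i ^ q i) ^ p) ∈ pE := hppow _
    have hsm : ((∏ i, t' i ^ q i) ^ p) * monE r = (⟨_, hmem⟩ : pE) • monE r := by
      rw [Algebra.smul_def]; rfl
    rw [hsm]
    refine Submodule.smul_mem _ _ (Submodule.subset_span ⟨r, ?_, rfl⟩)
    show ((α j : ℕ) + (β j : ℕ)) % p = 0
    simp only [Set.mem_setOf_eq] at hα hβ
    rw [hα, hβ]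
    simp
  have hspanmul : ∀ x ∈ Submodule.span pE MS, ∀ z ∈ Submodule.span pE MS,
      x * z ∈ Submodule.span pE MS := by
    intro x hx z hz
    have h1 := Submodule.mul_mem_mul hx hz
    rw [Submodule.span_mul_span] at h1
    refine Submodule.span_le.mpr ?_ h1
    rintro _ ⟨a, ha, b, hb, rfl⟩
    exact hmulmem a ha b hb
  -- unit vectors and monomials
  have hmon_single : ∀ i : Fin n,
      monE (Function.update (fun _ => (⟨0, hp.pos⟩ : Fin p)) i ⟨1, hp.one_lt⟩) = t' i := by
    intro i
    rw [hmonE_def]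
    simp only []
    rw [Finset.prod_eq_single i]
    · rw [Function.update_self]; exact pow_one _
    · intro i' _ hi'
      rw [Function.update_of_ne hi']; exact pow_zero _
    · exact fun h => absurd (Finset.mem_univ i) h
  have hmon_one : monE (fun _ => (⟨0, hp.pos⟩ : Fin p)) = 1 := by
    rw [hmonE_def]
    exact Finset.prod_eq_one fun i _ => pow_zero _
  -- the starting subfield B₀
  set Bint : IntermediateField pE E := IntermediateField.adjoin pE (t' '' {i | i ≠ j})
    with hBint
  set B₀ : Subfield E := Bint.toSubfield with hB₀
  have hB₀mem : ∀ x : E, x ∈ B₀ ↔ x ∈ Bint := fun x => Iff.rfl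
  have hB₀1 : ∀ x : E, x ^ p ∈ B₀ := fun x => by
    rw [hB₀]
    exact Bint.algebraMap_mem (⟨x ^ p, hppow x⟩ : pE)
  have hB₀2 : ∀ i, i ≠ j → t' i ∈ B₀ := fun i hi =>
    IntermediateField.subset_adjoin pE _ ⟨i, hi, rfl⟩
  have hB₀3 : t' j ∉ B₀ := by
    intro hmem
    have h1 : t' j ∈ Algebra.adjoin pE (t' '' {i | i ≠ j}) := by
      rw [← IntermediateField.adjoin_toSubalgebra_of_isAlgebraic
        (fun x _ => (hintpE x).isAlgebraic)]
      exact hmem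
    have h2 : t' j ∈ Submodule.span pE ((Submonoid.closure (t' '' {i | i ≠ j}) : Submonoid E) : Set E) := by
      rw [← Algebra.adjoin_eq_span]
      exact h1
    have h3 : ((Submonoid.closure (t' '' {i | i ≠ j}) : Submonoid E) : Set E)
        ⊆ Submodule.span pE MS := by
      intro x hx
      induction hx using Submonoid.closure_induction with
      | mem x hx =>
        obtain ⟨i, hi, rfl⟩ := hx
        refine Submodule.subset_span ?_
        refine ⟨Function.update (fun _ => (⟨0, hp.pos⟩ : Fin p)) i ⟨1, hp.one_lt⟩, ?_, hmon_single i⟩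
        simp only [Set.mem_setOf_eq]
        rw [Function.update_of_ne (fun h => hi h.symm : (j : Fin n) ≠ i)]
      | one =>
        exact hmon_one ▸ Submodule.subset_span ⟨_, rfl, rfl⟩
      | mul x z hx hz ihx ihz => exact hspanmul x ihx z ihz
    have h4 : t' j ∈ Submodule.span pE MS := Submodule.span_le.mpr h3 h2
    set ej : Fin n → Fin p := Function.update (fun _ => (⟨0, hp.pos⟩ : Fin p)) j ⟨1, hp.one_lt⟩
      with hej
    have h5 : monE ej ∉ Submodule.span pE (monE '' {α | α ≠ ej}) := by
      refine hliMon.notMem_span_image ?_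
      simp only [Set.mem_setOf_eq, not_not]
    apply h5
    rw [hmon_single j]
    refine Submodule.span_mono ?_ h4
    rintro _ ⟨α, hα, rfl⟩
    refine ⟨α, ?_, rfl⟩
    simp only [Set.mem_setOf_eq] at hα ⊢
    intro h
    rw [h, hej, Function.update_self] at hα
    simp at hα
  -- Zorn's lemma
  set S : Set (Subfield E) := {B | (∀ x : E, x ^ p ∈ B) ∧ (∀ i, i ≠ j → t' i ∈ B) ∧ t' j ∉ B}
    with hS
  have hB₀S : B₀ ∈ S := ⟨hB₀1, hB₀2, hB₀3⟩
  obtain ⟨B, -, hBmax⟩ := zorn_le_nonempty₀ S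
    (fun c hcS hchain y hy => by
      refine ⟨sSup c, ⟨?_, ?_, ?_⟩, fun z hz => le_sSup hz⟩
      · exact fun x => (le_sSup hy) ((hcS hy).1 x)
      · exact fun i hi => (le_sSup hy) ((hcS hy).2.1 i hi)
      · intro hmem
        obtain ⟨s, hs, hmem'⟩ := (Subfield.mem_sSup_of_directedOn ⟨y, hy⟩
          hchain.directedOn).mp hmem
        exact (hcS hs).2.2 hmem') B₀ hB₀S
  obtain ⟨hBp, hBt, hBj⟩ := hBmax.prop
  -- minimal polynomials over B
  have hint : ∀ x : E, IsIntegral B x := by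
    intro x
    refine ⟨X ^ p - C (⟨x ^ p, hBp x⟩ : B), monic_X_pow_sub_C _ hp.ne_zero, ?_⟩
    rw [eval₂_sub, eval₂_X_pow, eval₂_C]
    exact sub_self _
  have hmp : ∀ x : E, x ∉ B →
      minpoly B x = X ^ p - C (⟨x ^ p, hBp x⟩ : B) := by
    intro x hx
    refine (minpoly.eq_of_irreducible_of_monic ?_ ?_ ?_).symm
    · refine X_pow_sub_C_irreducible_of_prime hp ?_
      intro b hb
      apply hx
      have hval : (b : E) ^ p = x ^ p := by
        have h := congrArg (Subtype.val : B → E) hb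
        rwa [SubmonoidClass.coe_pow] at h
      have hsub : ((b : E) - x) ^ p = 0 := by
        rw [sub_pow_char, hval, sub_self]
      have : (b : E) = x := sub_eq_zero.mp (pow_eq_zero_iff hp.ne_zero |>.mp hsub)
      rw [← this]; exact b.2
    · rw [map_sub, map_pow, aeval_X, aeval_C]
      exact sub_self _
    · exact monic_X_pow_sub_C _ hp.ne_zero
  have hfr : ∀ x : E, x ∉ B →
      Module.finrank B (IntermediateField.adjoin B {x}) = p := by
    intro x hx
    rw [IntermediateField.adjoin.finrank (hint x), hmp x hx, natDegree_X_pow_sub_C]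
  -- E = B(t' j)
  have hmemadj : ∀ x : E, x ∈ IntermediateField.adjoin B {t' j} := by
    intro x
    by_cases hx : x ∈ B
    · exact (IntermediateField.adjoin B {t' j}).algebraMap_mem (⟨x, hx⟩ : B)
    · -- x ∉ B : use maximality
      set B' : Subfield E := Subfield.closure ((B : Set E) ∪ {x}) with hB'
      have hBB' : B ≤ B' := fun z hz => Subfield.subset_closure (Set.mem_union_left _ hz)
      have hxB' : x ∈ B' := Subfield.subset_closure (Set.mem_union_right _ rfl)
      have ht'jB' : t' j ∈ B' := by
        by_contra h'
        have hB'S : B' ∈ S :=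
          ⟨fun z => hBB' (hBp z), fun i hi => hBB' (hBt i hi), h'⟩
        exact hx ((hBmax.eq_of_le hB'S hBB') ▸ hxB')
      have ht'jadj : t' j ∈ IntermediateField.adjoin B {x} := by
        have hle : B' ≤ (IntermediateField.adjoin B {x}).toSubfield := by
          refine Subfield.closure_le.mpr (Set.union_subset ?_ ?_)
          · intro z hz
            exact (IntermediateField.adjoin B {x}).algebraMap_mem (⟨z, hz⟩ : B)
          · intro z hz
            rw [Set.mem_singleton_iff] at hz
            rw [hz]
            exact (IntermediateField.mem_toSubfield _ _).mpr
              (IntermediateField.mem_adjoin_simple_self B x)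
        exact (IntermediateField.mem_toSubfield _ _).mp (hle ht'jB')
      have hle2 : IntermediateField.adjoin B {t' j} ≤ IntermediateField.adjoin B {x} :=
        IntermediateField.adjoin_simple_le_iff.mpr ht'jadj
      haveI : FiniteDimensional B (IntermediateField.adjoin B {x}) :=
        IntermediateField.adjoin.finiteDimensional (hint x)
      have heq : IntermediateField.adjoin B {t' j} = IntermediateField.adjoin B {x} :=
        IntermediateField.eq_of_le_of_finrank_eq hle2 (by rw [hfr _ hBj, hfr _ hx])
      rw [heq]
      exact IntermediateField.mem_adjoin_simple_self B x
  have htop : IntermediateField.adjoin B {t' j} = ⊤ := by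
    refine IntermediateField.ext fun x => ⟨fun _ => IntermediateField.mem_top, fun _ => hmemadj x⟩
  -- power basis of E over B with generator t' j
  let e : (IntermediateField.adjoin B {t' j}) ≃ₐ[B] E :=
    (IntermediateField.equivOfEq htop).trans IntermediateField.topEquiv
  let pb : PowerBasis B E := (IntermediateField.adjoin.powerBasis (hint (t' j))).map e
  have hgen : pb.gen = t' j := rfl
  have hdim : pb.dim = p := by
    show (IntermediateField.adjoin.powerBasis (hint (t' j))).dim = p
    rw [IntermediateField.adjoin.powerBasis_dim, hmp _ hBj, natDegree_X_pow_sub_C]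
  -- the linear map δ0 with δ0 (t'j ^ m) = m * t'j ^ (m-1)
  let δ0 : E →ₗ[B] E :=
    pb.basis.constr ℕ (fun m : Fin pb.dim => ((m : ℕ) : E) * t' j ^ ((m : ℕ) - 1))
  have hbas : ∀ (N : ℕ) (h : N < pb.dim), pb.basis ⟨N, h⟩ = t' j ^ N := by
    intro N h
    rw [PowerBasis.coe_basis, hgen]
  have hδ0pow : ∀ N : ℕ, δ0 (t' j ^ N) = (N : E) * t' j ^ (N - 1) := by
    intro N
    induction N using Nat.strong_induction_on with
    | _ N ihN =>
      rcases lt_or_ge N p with hN | hN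
      · rw [← hbas N (hdim ▸ hN), Module.Basis.constr_basis]
      · -- N ≥ p
        have hsplit : t' j ^ N = (⟨t' j ^ p, hBp _⟩ : B) • t' j ^ (N - p) := by
          rw [Algebra.smul_def]
          show t' j ^ N = (t' j ^ p) * t' j ^ (N - p)
          rw [← pow_add]
          congr 1
          omega
        rw [hsplit, LinearMap.map_smul, ihN (N - p) (by have := hp.pos; omega),
          Algebra.smul_def]
        show t' j ^ p * (((N - p : ℕ) : E) * t' j ^ (N - p - 1)) = (N : E) * t' j ^ (N - 1)
        have hcast : ((N - p : ℕ) : E) = (N : E) := by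
          rw [Nat.cast_sub hN, CharP.cast_eq_zero E p, sub_zero]
        rw [hcast]
        rcases Nat.eq_or_lt_of_le hN with heq | hlt
        · have h0 : (N : E) = 0 := by rw [← heq]; exact CharP.cast_eq_zero E p
          rw [h0, zero_mul, mul_zero, zero_mul]
        · rw [mul_left_comm]
          congr 1
          rw [← pow_add]
          congr 1
          omega
  -- Leibniz rule for δ0
  have hbb : ∀ k m : Fin pb.dim, δ0 (pb.basis k * pb.basis m)
      = pb.basis k * δ0 (pb.basis m) + pb.basis m * δ0 (pb.basis k) := by
    intro k m
    have hk := hbas (k : ℕ) k.isLt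
    have hm := hbas (m : ℕ) m.isLt
    rw [show (⟨(k : ℕ), k.isLt⟩ : Fin pb.dim) = k from Fin.ext rfl] at hk
    rw [show (⟨(m : ℕ), m.isLt⟩ : Fin pb.dim) = m from Fin.ext rfl] at hm
    rw [hk, hm, ← pow_add, hδ0pow, hδ0pow, hδ0pow]
    by_cases hk0 : (k : ℕ) = 0
    · simp [hk0]
    by_cases hm0 : (m : ℕ) = 0
    · simp [hm0, mul_comm]
    have h1 : (k : ℕ) + (m : ℕ) - 1 = (k : ℕ) + ((m : ℕ) - 1) := by omega
    have h2 : (k : ℕ) + (m : ℕ) - 1 = ((k : ℕ) - 1) + (m : ℕ) := by omega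
    have h3 : (((k : ℕ) + (m : ℕ) : ℕ) : E) = ((k : ℕ) : E) + ((m : ℕ) : E) := by push_cast; ring
    rw [h3, add_mul, add_comm]
    congr 1
    · rw [h1, pow_add]; ring
    · rw [h2, pow_add]; ring
  have hkey : ∀ a b : E, δ0 (a * b) = a * δ0 b + b * δ0 a := by
    have h1 : ∀ m : Fin pb.dim, ∀ a : E,
        δ0 (a * pb.basis m) = a * δ0 (pb.basis m) + pb.basis m * δ0 a := by
      intro m
      have heq : δ0 ∘ₗ LinearMap.mulRight B (pb.basis m)
          = LinearMap.mulRight B (δ0 (pb.basis m)) + (LinearMap.mulLeft B (pb.basis m)) ∘ₗ δ0 := by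
        refine pb.basis.ext fun k => ?_
        simp only [LinearMap.comp_apply, LinearMap.add_apply, LinearMap.mulRight_apply,
          LinearMap.mulLeft_apply]
        exact hbb k m
      intro a
      have := DFunLike.congr_fun heq a
      simpa only [LinearMap.comp_apply, LinearMap.add_apply, LinearMap.mulRight_apply,
        LinearMap.mulLeft_apply] using this
    intro a b
    have heq : δ0 ∘ₗ LinearMap.mulLeft B a
        = (LinearMap.mulLeft B a) ∘ₗ δ0 + LinearMap.mulRight B (δ0 a) := by
      refine pb.basis.ext fun m => ?_
      simp only [LinearMap.comp_apply, LinearMap.add_apply, LinearMap.mulRight_apply,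
        LinearMap.mulLeft_apply]
      rw [h1 m a]
    have := DFunLike.congr_fun heq b
    simpa only [LinearMap.comp_apply, LinearMap.add_apply, LinearMap.mulRight_apply,
      LinearMap.mulLeft_apply, mul_comm b (δ0 a)] using this
  -- the derivation
  let δ : Derivation B E E :=
    { toLinearMap := δ0
      map_one_eq_zero' := by
        have h := hδ0pow 0
        simpa using h
      leibniz' := fun a b => by
        simp only [smul_eq_mul]
        exact hkey a b }
  have hδj : δ (t' j) = 1 := by
    have h := hδ0pow 1
    show δ0 (t' j) = 1
    simpa using h
  have hδi : ∀ i, i ≠ j → δ (t' i) = 0 := by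
    intro i hi
    have : t' i = algebraMap B E (⟨t' i, hBt i hi⟩ : B) := rfl
    rw [this, Derivation.map_algebraMap]
  -- conclude
  let φ : Ω[E⁄ℤ] →ₗ[E] E :=
    δ.liftKaehlerDifferential ∘ₗ KaehlerDifferential.map ℤ B E E
  have hφ : ∀ x : E, φ (KaehlerDifferential.D ℤ E x) = δ x := by
    intro x
    show δ.liftKaehlerDifferential (KaehlerDifferential.map ℤ B E E (KaehlerDifferential.D ℤ E x)) = δ x
    rw [KaehlerDifferential.map_D]
    exact Derivation.liftKaehlerDifferential_comp_D δ x
  have h0 : φ (∑ i, g i • KaehlerDifferential.D ℤ E (t' i)) = 0 := by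
    rw [hg, map_zero]
  rw [map_sum] at h0
  simp only [map_smul, hφ] at h0
  rw [Fintype.sum_eq_single j (fun i hi => by rw [hδi i hi, smul_zero])] at h0
  rw [hδj, smul_eq_mul, mul_one] at h0
  exact h0
end

section
/- Let F be a field of characteristic p > 0 and t₁, …, tₙ ∈ F elements with dt₁, …, dtₙ linearly independent in Ω¹_{F/ℤ}. Set E = F(tₙ^{1/p}). Then the differentials dt₁, …, dt_{n-1} remain linearly independent in Ω¹_{E/ℤ}. -/
open Polynomial

set_option synthInstance.maxHeartbeats 1000000
set_option maxHeartbeats 1000000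

/-- Dual functionals for a linearly independent family over a field. -/
lemma exists_dual_of_linearIndependent {K V ι : Type*} [Field K] [AddCommGroup V]
    [Module K V] [DecidableEq ι] {v : ι → V} (hv : LinearIndependent K v) (j : ι) :
    ∃ f : V →ₗ[K] K, ∀ i, f (v i) = if i = j then 1 else 0 := by
  classical
  have hs := (linearIndepOn_id_range_iff hv.injective).mpr hv
  let b := Module.Basis.extend hs
  have hmem : ∀ i, v i ∈ hs.extend (Set.subset_univ _) := fun i =>
    hs.subset_extend _ ⟨i, rfl⟩
  refine ⟨b.coord ⟨v j, hmem j⟩, fun i => ?_⟩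
  have hb : ∀ i, b ⟨v i, hmem i⟩ = v i := fun i => Module.Basis.extend_apply_self hs _
  rw [← hb i, Module.Basis.coord_apply, Module.Basis.repr_self, Finsupp.single_apply]
  by_cases h : i = j
  · subst h; simp
  · rw [if_neg h, if_neg]
    intro hc
    exact h (hv.injective (by simpa using congrArg Subtype.val hc))

/-- Coefficientwise action of a derivation, as a derivation `F[X] → F[X]`. -/
noncomputable def derivMapCoeffs {F : Type*} [Field F] (d : Derivation ℤ F F) :
    Derivation ℤ F[X] F[X] :=
  ((PolynomialModule.equivPolynomialSelf :
    PolynomialModule F F ≃ₗ[F[X]] F[X]).toLinearMap).compDer d.mapCoeffs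

@[simp] lemma derivMapCoeffs_C {F : Type*} [Field F] (d : Derivation ℤ F F) (a : F) :
    derivMapCoeffs d (C a) = C (d a) := by
  show (PolynomialModule.equivPolynomialSelf (R := F)) (d.mapCoeffs (C a)) = _
  rw [Derivation.mapCoeffs_C, PolynomialModule.equivPolynomialSelf_apply_eq,
    PolynomialModule.equivPolynomial_single, monomial_zero_left]

@[simp] lemma derivMapCoeffs_X {F : Type*} [Field F] (d : Derivation ℤ F F) :
    derivMapCoeffs d (X : F[X]) = 0 := by
  show (PolynomialModule.equivPolynomialSelf (R := F)) (d.mapCoeffs X) = _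
  rw [Derivation.mapCoeffs_X, map_zero]



/-- Let `F` be a field of characteristic `p > 0` and `t₀, …, tₙ ∈ F` elements with
linearly independent differentials in `Ω¹_{F/ℤ}`.  Set `E = F(tₙ^{1/p})`, the extension
obtained by adjoining a `p`-th root of the last element.  Then the differentials of the
(images of the) remaining elements `t₀, …, t_{n-1}` are linearly independent
in `Ω¹_{E/ℤ}`. -/
theorem stmt_6 (F : Type*) [Field F] (p : ℕ) (hp : p.Prime) [CharP F p]
    (n : ℕ) (t : Fin (n + 1) → F)
    (hli : LinearIndependent F (fun i : Fin (n + 1) => KaehlerDifferential.D ℤ F (t i)))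
    (r : AlgebraicClosure F)
    (hr : r ^ p = algebraMap F (AlgebraicClosure F) (t (Fin.last n)))
    (E : IntermediateField F (AlgebraicClosure F)) (hE : E = IntermediateField.adjoin F {r}) :
    LinearIndependent E (fun i : Fin n =>
      KaehlerDifferential.D ℤ E (algebraMap F E (t i.castSucc))) := by
  classical
  -- `t n` is not a p-th power
  have hne : ∀ b : F, b ^ p ≠ t (Fin.last n) := by
    intro b hb
    apply hli.ne_zero (Fin.last n)
    rw [← hb, Derivation.leibniz_pow]
    have : (p : F) = 0 := CharP.cast_eq_zero F p
    rw [← Nat.cast_smul_eq_nsmul F, this, zero_smul]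
  -- minimal polynomial of r
  have hrF : IsIntegral F r :=
    ⟨X ^ p - C (t (Fin.last n)), monic_X_pow_sub_C _ hp.ne_zero, by
      simp [hr, sub_eq_zero]⟩
  have hmin : minpoly F r = X ^ p - C (t (Fin.last n)) := by
    refine (minpoly.eq_of_irreducible_of_monic
      (X_pow_sub_C_irreducible_of_prime hp hne) ?_ (monic_X_pow_sub_C _ hp.ne_zero)).symm
    simp [hr, sub_eq_zero]
  -- r as an element of E, and the evaluation map
  have hrE : r ∈ E := hE ▸ IntermediateField.mem_adjoin_simple_self F r
  set r' : E := ⟨r, hrE⟩ with hr'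
  set φ : F[X] →ₐ[F] E := aeval r' with hφ
  have hφr : ∀ g : F[X], algebraMap E (AlgebraicClosure F) (φ g) = aeval r g := by
    intro g
    rw [hφ, show (algebraMap E (AlgebraicClosure F)) (aeval r' g)
        = (IsScalarTower.toAlgHom F E (AlgebraicClosure F)) (aeval r' g) from rfl,
      ← Polynomial.aeval_algHom_apply]
    rfl
  have hφsurj : Function.Surjective φ := by
    intro x
    have hx : (x : AlgebraicClosure F) ∈ Algebra.adjoin F ({r} : Set (AlgebraicClosure F)) := by
      rw [← IntermediateField.adjoin_simple_toSubalgebra_of_isAlgebraic hrF.isAlgebraic]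
      exact hE ▸ x.2
    rw [Algebra.adjoin_singleton_eq_range_aeval] at hx
    obtain ⟨g, hg⟩ := hx
    refine ⟨g, Subtype.ext ?_⟩
    rw [← hg]
    exact hφr g
  -- the key lifting condition
  have hker : ∀ g : F[X], φ g = 0 → (minpoly F r) ∣ g := by
    intro g hg
    apply minpoly.dvd
    rw [← hφr, hg, map_zero]
  refine Fintype.linearIndependent_iff.mpr fun g hg j => ?_
  -- dual derivation for index j
  obtain ⟨f, hf⟩ := exists_dual_of_linearIndependent hli j.castSucc
  set d : Derivation ℤ F F := f.compDer (KaehlerDifferential.D ℤ F) with hd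
  have hdt : ∀ i : Fin (n + 1), d (t i) = if i = j.castSucc then 1 else 0 := fun i => hf i
  have hdtn : d (t (Fin.last n)) = 0 := by
    rw [hdt, if_neg]
    exact (Fin.castSucc_lt_last j).ne'
  -- the derivation descends to E
  have hcond : ∀ g : F[X], φ g = 0 → φ (derivMapCoeffs d g) = 0 := by
    intro g hg
    obtain ⟨q, hq⟩ := hker g hg
    rw [hmin] at hq
    subst hq
    rw [Derivation.leibniz, smul_eq_mul, smul_eq_mul]
    have h1 : derivMapCoeffs d (X ^ p - C (t (Fin.last n))) = 0 := by
      rw [map_sub, Derivation.leibniz_pow, derivMapCoeffs_X, derivMapCoeffs_C, hdtn,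
        map_zero, smul_zero, smul_zero, sub_zero]
    have h2 : φ (X ^ p - C (t (Fin.last n))) = 0 := by
      apply (algebraMap E (AlgebraicClosure F)).injective
      rw [hφr, map_zero]
      simp [hr, sub_eq_zero]
    rw [h1, mul_zero, add_zero, map_mul, h2, zero_mul]
  set ψ : F[X] →ₐ[ℤ] E := φ.restrictScalars ℤ with hψ
  have hψc : ⇑ψ = ⇑φ := rfl
  have hψsurj : Function.Surjective ψ := hψc ▸ hφsurj
  have hψcond : ∀ g : F[X], ψ g = 0 → ψ (derivMapCoeffs d g) = 0 := by
    simpa [hψc] using hcond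
  set D : Derivation ℤ E E :=
    Derivation.liftOfSurjective (f := ψ) (d := derivMapCoeffs d) hψsurj hψcond with hD
  have hDalg : ∀ a : F, D (algebraMap F E a) = algebraMap F E (d a) := by
    intro a
    have h3 : algebraMap F E a = ψ (C a) := by simp [hψ, hφ]
    rw [h3, hD, Derivation.liftOfSurjective_apply, derivMapCoeffs_C]
    simp [hψ, hφ]
  -- conclude
  have hsum := congrArg D.liftKaehlerDifferential hg
  rw [map_sum, map_zero] at hsum
  simp only [map_smul, Derivation.liftKaehlerDifferential_comp_D, hDalg, smul_eq_mul] at hsum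
  have heval : ∀ i : Fin n, d (t i.castSucc) = if i = j then 1 else 0 := by
    intro i
    rw [hdt]
    simp [Fin.castSucc_inj]
  simp only [heval] at hsum
  simpa [Finset.sum_ite_eq', mul_ite, mul_one, mul_zero,
    apply_ite (algebraMap F E)] using hsum
end

section
/- Let k be a field of characteristic p ≥ 3, n ≥ 1, and let F be the algebraic closure of k(t₁,…,tₙ). Then the polynomial y^p − y z^{p−1} + Σᵢ tᵢ xᵢ^p is irreducible in F[x₁,…,xₙ,y,z]; equivalently, the hypersurface X ⊂ ℙ^{n+1} it defines is geometrically integral. -/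
open MvPolynomial

/-- A linear polynomial `u - w·X` over a domain whose coefficients have only unit
common divisors is irreducible. -/
theorem aux_linear_irred {R : Type*} [CommRing R] [IsDomain R] {u w : R}
    (hw : w ≠ 0) (h : ∀ d : R, d ∣ u → d ∣ w → IsUnit d) :
    Irreducible (Polynomial.C u - Polynomial.C w * Polynomial.X) := by
  set q : Polynomial R := Polynomial.C u - Polynomial.C w * Polynomial.X with hqdef
  have hq : q = Polynomial.C (-w) * Polynomial.X + Polynomial.C u := by
    rw [hqdef, map_neg]; ring
  have hdeg : q.degree = 1 := by
    rw [hq]; exact Polynomial.degree_linear (neg_ne_zero.mpr hw)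
  have hqne : q ≠ 0 := fun h0 => by simp [h0] at hdeg
  have hnd : q.natDegree = 1 := Polynomial.natDegree_eq_of_degree_eq_some hdeg
  have hc0 : q.coeff 0 = u := by simp [hqdef]
  have hc1 : q.coeff 1 = -w := by simp [hqdef]
  have key : ∀ g h' : Polynomial R, q = g * h' → g.natDegree = 0 → IsUnit g := by
    intro g h' hgh hg0
    obtain ⟨r, hr⟩ := Polynomial.natDegree_eq_zero.mp hg0
    have hru : r ∣ u := by
      refine ⟨h'.coeff 0, ?_⟩
      rw [← hc0, hgh, ← hr, Polynomial.coeff_C_mul]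
    have hrw : r ∣ w := by
      refine ⟨-(h'.coeff 1), ?_⟩
      have : q.coeff 1 = r * h'.coeff 1 := by rw [hgh, ← hr, Polynomial.coeff_C_mul]
      rw [hc1] at this
      rw [mul_neg, ← this, neg_neg]
    rw [← hr]
    exact (Polynomial.isUnit_C).mpr (h r hru hrw)
  constructor
  · intro hu
    have := Polynomial.degree_eq_zero_of_isUnit hu
    rw [hdeg] at this
    exact one_ne_zero this
  · intro g h' hgh
    have hg0 : g ≠ 0 := fun h0 => hqne (by rw [hgh, h0, zero_mul])
    have hh0 : h' ≠ 0 := fun h0 => hqne (by rw [hgh, h0, mul_zero])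
    have hsum : g.natDegree + h'.natDegree = 1 := by
      rw [← Polynomial.natDegree_mul hg0 hh0, ← hgh, hnd]
    rcases Nat.add_eq_one_iff.mp hsum with ⟨hg, _⟩ | ⟨_, hh⟩
    · exact Or.inl (key g h' hgh hg)
    · exact Or.inr (key h' g (by rw [hgh, mul_comm]) hh)

theorem aux_prime_X {K : Type*} [Field K] {σ : Type*} (b : σ) :
    Prime (X b : MvPolynomial σ K) := by
  classical
  let e := Equiv.optionSubtypeNe b
  let E := (renameEquiv K e.symm).trans (optionEquivLeft K {x : σ // x ≠ b})
  have hEb : E (X b) = Polynomial.X := by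
    simp only [E, AlgEquiv.trans_apply, renameEquiv_apply, rename_X, e,
      Equiv.optionSubtypeNe_symm_self, optionEquivLeft_X_none]
  have : Prime (E (X b)) := by rw [hEb]; exact Polynomial.prime_X
  exact (MulEquiv.prime_iff (p := X b) E.toMulEquiv).mp (by simpa using this)

theorem aux_X_not_dvd {K : Type*} [Field K] {σ : Type*} {a c : σ} (h : a ≠ c) :
    ¬ ((X a : MvPolynomial σ K) ∣ X c) := by
  classical
  rintro ⟨g, hg⟩
  have := congrArg (eval (fun v => if v = a then (0 : K) else 1)) hg
  rw [eval_X, eval_mul, eval_X, if_neg (Ne.symm h), if_pos rfl, zero_mul] at this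
  exact one_ne_zero this

theorem aux_core_irred {K : Type*} [Field K] {σ : Type*} {a b c : σ}
    (hab : a ≠ b) (hcb : c ≠ b) (hac : a ≠ c) (m r : ℕ) :
    Irreducible ((X a : MvPolynomial σ K) ^ m - X b * X c ^ r) := by
  classical
  let e := Equiv.optionSubtypeNe b
  let E := (renameEquiv K e.symm).trans (optionEquivLeft K {x : σ // x ≠ b})
  have ha : E (X a) = Polynomial.C (X ⟨a, hab⟩) := by
    simp only [E, AlgEquiv.trans_apply, renameEquiv_apply, rename_X, e,
      Equiv.optionSubtypeNe_symm_of_ne hab, optionEquivLeft_X_some]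
  have hb : E (X b) = Polynomial.X := by
    simp only [E, AlgEquiv.trans_apply, renameEquiv_apply, rename_X, e,
      Equiv.optionSubtypeNe_symm_self, optionEquivLeft_X_none]
  have hc : E (X c) = Polynomial.C (X ⟨c, hcb⟩) := by
    simp only [E, AlgEquiv.trans_apply, renameEquiv_apply, rename_X, e,
      Equiv.optionSubtypeNe_symm_of_ne hcb, optionEquivLeft_X_some]
  have key : E (X a ^ m - X b * X c ^ r)
      = Polynomial.C ((X ⟨a, hab⟩ : MvPolynomial {x : σ // x ≠ b} K) ^ m)
        - Polynomial.C ((X ⟨c, hcb⟩ : MvPolynomial {x : σ // x ≠ b} K) ^ r) * Polynomial.X := by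
    rw [map_sub, map_mul, map_pow, map_pow, ha, hb, hc, map_pow, map_pow]
    ring
  rw [← MulEquiv.irreducible_iff E.toMulEquiv]
  have : (E.toMulEquiv : MvPolynomial σ K → _) = E := rfl
  rw [this, key]
  apply aux_linear_irred
  · exact pow_ne_zero _ (X_ne_zero _)
  · intro d hdu hdw
    have hprime : Prime (X (⟨c, hcb⟩ : {x : σ // x ≠ b}) : MvPolynomial {x : σ // x ≠ b} K) :=
      aux_prime_X _
    rcases (dvd_prime_pow hprime r).mp hdw with ⟨i, hir, hassoc⟩
    rcases Nat.eq_zero_or_pos i with rfl | hi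
    · rw [pow_zero] at hassoc
      exact isUnit_of_dvd_one hassoc.dvd
    · exfalso
      have hXd : (X (⟨c, hcb⟩ : {x : σ // x ≠ b}) : MvPolynomial {x : σ // x ≠ b} K) ∣ d :=
        dvd_trans (dvd_pow_self _ hi.ne') hassoc.symm.dvd
      have : (X (⟨c, hcb⟩ : {x : σ // x ≠ b}) : MvPolynomial {x : σ // x ≠ b} K) ∣ X ⟨a, hab⟩ :=
        hprime.dvd_of_dvd_pow (hXd.trans hdu)
      exact aux_X_not_dvd (fun h => hac (congrArg Subtype.val h).symm) this
/-- Let `k` be a field of characteristic `p ≥ 3`, `n ≥ 1`, and let `F` be the algebraic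
closure of the rational function field `k(t₁,…,tₙ)`.  Then the polynomial
`y^p - y z^{p-1} + Σᵢ tᵢ xᵢ^p` is irreducible in `F[x₁,…,xₙ,y,z]`; equivalently, the
hypersurface `X ⊂ ℙ^{n+1}` it defines is geometrically integral.
Here the variables `x₁,…,xₙ` are indexed by `Sum.inl i`, while `y = X (Sum.inr 0)` and
`z = X (Sum.inr 1)`. -/
theorem stmt_9 (k : Type*) [Field k] (p : ℕ) (hp : p.Prime) (hp3 : 3 ≤ p) [CharP k p]
    (n : ℕ) (hn : 1 ≤ n)
    (F : Type*) [Field F] [Algebra (FractionRing (MvPolynomial (Fin n) k)) F]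
    [IsAlgClosure (FractionRing (MvPolynomial (Fin n) k)) F]
    (t : Fin n → F)
    (ht : ∀ i, t i = algebraMap (FractionRing (MvPolynomial (Fin n) k)) F
      (algebraMap (MvPolynomial (Fin n) k) _ (MvPolynomial.X i))) :
    Irreducible ((X (Sum.inr 0) : MvPolynomial (Fin n ⊕ Fin 2) F) ^ p -
      X (Sum.inr 0) * X (Sum.inr 1) ^ (p - 1) +
      ∑ i : Fin n, C (t i) * X (Sum.inl i) ^ p) := by
  classical
  haveI : Fact p.Prime := ⟨hp⟩
  -- characteristic p everywhere
  haveI : CharP (FractionRing (MvPolynomial (Fin n) k)) p :=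
    charP_of_injective_algebraMap
      (IsFractionRing.injective (MvPolynomial (Fin n) k) (FractionRing (MvPolynomial (Fin n) k))) p
  haveI : CharP F p :=
    charP_of_injective_algebraMap (algebraMap (FractionRing (MvPolynomial (Fin n) k)) F).injective p
  haveI : IsAlgClosed F := IsAlgClosure.isAlgClosed (FractionRing (MvPolynomial (Fin n) k))
  -- p-th roots of the t i
  have hex : ∀ i : Fin n, ∃ y : F, y ^ p = t i := fun i =>
    IsAlgClosed.exists_pow_nat_eq (t i) hp.pos
  choose s hs using hex
  set i₀ : Fin n := ⟨0, hn⟩ with hi₀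
  have ht0 : t i₀ ≠ 0 := by
    rw [ht i₀]
    intro h0
    have h1 : algebraMap (MvPolynomial (Fin n) k) (FractionRing (MvPolynomial (Fin n) k))
        (MvPolynomial.X i₀) = 0 :=
      (algebraMap (FractionRing (MvPolynomial (Fin n) k)) F).injective (by rw [h0, map_zero])
    exact X_ne_zero i₀
      (IsFractionRing.injective (MvPolynomial (Fin n) k) (FractionRing (MvPolynomial (Fin n) k))
        (by rw [h1, map_zero]))
  have hs0 : s i₀ ≠ 0 := fun h => ht0 (by rw [← hs i₀, h, zero_pow hp.ne_zero])
  -- the change of variables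
  set R := MvPolynomial (Fin n ⊕ Fin 2) F with hR
  set L : R := ∑ i : Fin n, C (s i) * X (Sum.inl i) with hL
  set Ks : R := ∑ i ∈ Finset.univ.erase i₀, C (s i) * X (Sum.inl i) with hKs
  have hLK : L = C (s i₀) * X (Sum.inl i₀) + Ks := by
    rw [hL, hKs]
    exact (Finset.add_sum_erase _ _ (Finset.mem_univ i₀)).symm
  set u : Fin n ⊕ Fin 2 → R := Sum.elim
    (fun i => if i = i₀ then X (Sum.inr 0) + L else X (Sum.inl i))
    (fun j => X (Sum.inr j)) with hu
  set w : Fin n ⊕ Fin 2 → R := Sum.elim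
    (fun i => if i = i₀ then C (s i₀)⁻¹ * (X (Sum.inl i₀) - X (Sum.inr 0) - Ks)
      else X (Sum.inl i))
    (fun j => X (Sum.inr j)) with hw
  have huK : aeval u Ks = Ks := by
    rw [hKs, map_sum]
    refine Finset.sum_congr rfl fun i hi => ?_
    have hii : i ≠ i₀ := (Finset.mem_erase.mp hi).1
    rw [map_mul, aeval_C, aeval_X, hu, Sum.elim_inl, if_neg hii, algebraMap_eq]
  have hwK : aeval w Ks = Ks := by
    rw [hKs, map_sum]
    refine Finset.sum_congr rfl fun i hi => ?_
    have hii : i ≠ i₀ := (Finset.mem_erase.mp hi).1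
    rw [map_mul, aeval_C, aeval_X, hw, Sum.elim_inl, if_neg hii, algebraMap_eq]
  have hCs : (C (s i₀)⁻¹ : R) * C (s i₀) = 1 := by
    rw [← C_mul, inv_mul_cancel₀ hs0, C_1]
  have h1 : (aeval u).comp (aeval w) = AlgHom.id F R := by
    apply MvPolynomial.algHom_ext
    rintro (i | j)
    · by_cases hii : i = i₀
      · subst hii
        rw [AlgHom.comp_apply, aeval_X, AlgHom.id_apply, hw, Sum.elim_inl, if_pos rfl,
          map_mul, aeval_C, map_sub, map_sub, aeval_X, aeval_X, hu, Sum.elim_inl, if_pos rfl,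
          Sum.elim_inr, huK, algebraMap_eq, hLK]
        linear_combination (X (Sum.inl i₀) : R) * hCs
      · rw [AlgHom.comp_apply, aeval_X, AlgHom.id_apply, hw, Sum.elim_inl, if_neg hii,
          aeval_X, hu, Sum.elim_inl, if_neg hii]
    · rw [AlgHom.comp_apply, aeval_X, AlgHom.id_apply, hw, Sum.elim_inr, aeval_X, hu,
        Sum.elim_inr]
  have h2 : (aeval w).comp (aeval u) = AlgHom.id F R := by
    apply MvPolynomial.algHom_ext
    rintro (i | j)
    · by_cases hii : i = i₀
      · subst hii
        rw [AlgHom.comp_apply, aeval_X, AlgHom.id_apply, hu, Sum.elim_inl, if_pos rfl,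
          map_add, aeval_X, hLK, map_add, map_mul, aeval_C, aeval_X, hw, Sum.elim_inl,
          if_pos rfl, Sum.elim_inr, hwK, algebraMap_eq]
        linear_combination ((X (Sum.inl i₀) : R) - X (Sum.inr 0) - Ks) * hCs
      · rw [AlgHom.comp_apply, aeval_X, AlgHom.id_apply, hu, Sum.elim_inl, if_neg hii,
          aeval_X, hw, Sum.elim_inl, if_neg hii]
    · rw [AlgHom.comp_apply, aeval_X, AlgHom.id_apply, hu, Sum.elim_inr, aeval_X, hw,
        Sum.elim_inr]
  let E : R ≃ₐ[F] R := AlgEquiv.ofAlgHom (aeval u) (aeval w) h1 h2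
  -- the polynomial before the change of variables
  have hcore : Irreducible ((X (Sum.inl i₀) : R) ^ p - X (Sum.inr 0) * X (Sum.inr 1) ^ (p - 1)) :=
    aux_core_irred (by simp) (by simp) (by simp) p (p - 1)
  have hEg : E ((X (Sum.inl i₀) : R) ^ p - X (Sum.inr 0) * X (Sum.inr 1) ^ (p - 1))
      = (X (Sum.inr 0) : R) ^ p - X (Sum.inr 0) * X (Sum.inr 1) ^ (p - 1)
        + ∑ i : Fin n, C (t i) * X (Sum.inl i) ^ p := by
    have hEX : E (X (Sum.inl i₀)) = X (Sum.inr 0) + L := by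
      show aeval u (X (Sum.inl i₀)) = _
      rw [aeval_X, hu, Sum.elim_inl, if_pos rfl]
    have hEY : E (X (Sum.inr (0 : Fin 2))) = X (Sum.inr 0) := by
      show aeval u (X (Sum.inr (0 : Fin 2))) = _
      rw [aeval_X, hu, Sum.elim_inr]
    have hEZ : E (X (Sum.inr (1 : Fin 2))) = X (Sum.inr 1) := by
      show aeval u (X (Sum.inr (1 : Fin 2))) = _
      rw [aeval_X, hu, Sum.elim_inr]
    have hLp : L ^ p = ∑ i : Fin n, C (t i) * X (Sum.inl i) ^ p := by
      rw [hL, sum_pow_char]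
      refine Finset.sum_congr rfl fun i _ => ?_
      rw [mul_pow, ← C_pow, hs]
    rw [map_sub, map_pow, map_mul, map_pow, hEX, hEY, hEZ, add_pow_char, hLp]
    ring
  have := (MulEquiv.irreducible_iff E.toMulEquiv).mpr hcore
  have hco : (E.toMulEquiv : R → R) = E := rfl
  rw [hco, hEg] at this
  exact this
end

section
/- Let F be a field of characteristic 2 and t₁, t₂ ∈ F. The polynomial y₁³ + t₁x₁²y₁ + y₂³ + t₂x₂²y₂ is irreducible in F[x₁, x₂, y₁, y₂] whenever t₁ ≠ 0 and t₂ ≠ 0. -/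
set_option maxRecDepth 4000

open MvPolynomial


lemma myPrimeX (F : Type*) [Field F] {n : ℕ} (i : Fin (n+1)) :
    Prime (MvPolynomial.X i : MvPolynomial (Fin (n+1)) F) := by
  have h0 : Prime (MvPolynomial.X 0 : MvPolynomial (Fin (n+1)) F) := by
    rw [← MulEquiv.prime_iff (finSuccEquiv F n).toMulEquiv]
    have : (finSuccEquiv F n).toMulEquiv (MvPolynomial.X 0) = Polynomial.X := by
      simp [finSuccEquiv_X_zero]
    rw [this]
    exact Polynomial.prime_X
  rw [← MulEquiv.prime_iff (renameEquiv F (Equiv.swap i 0)).toMulEquiv]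
  have : (renameEquiv F (Equiv.swap i 0)).toMulEquiv (MvPolynomial.X i)
      = (MvPolynomial.X 0 : MvPolynomial (Fin (n+1)) F) := by simp
  rw [this]
  exact h0

/-- Abstract form: in a UFD `R` of characteristic 2, if `a = u * π` with `u` a unit and
`π` prime, and `π ∤ c`, `c ≠ 0`, then `C a * X ^ 2 + C c` is irreducible in `R[X]`. -/
lemma quad_irred {R : Type*} [CommRing R] [IsDomain R] [UniqueFactorizationMonoid R]
    [CharP R 2] {a c u π : R} (hu : IsUnit u) (hπ : Prime π) (ha_def : a = u * π)
    (hXc : ¬ π ∣ c) (hc : c ≠ 0) :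
    Irreducible (Polynomial.C a * Polynomial.X ^ 2 + Polynomial.C c) := by
  have ha : a ≠ 0 := by
    rw [ha_def]; exact mul_ne_zero hu.ne_zero hπ.ne_zero
  -- primitivity
  have hq_prim : (Polynomial.C a * Polynomial.X ^ 2 + Polynomial.C c).IsPrimitive := by
    intro r hr
    rw [Polynomial.C_dvd_iff_dvd_coeff] at hr
    have hr2 : r ∣ a := by simpa using hr 2
    have hr0 : r ∣ c := by simpa using hr 0
    have haX : a ∣ π := by
      rcases hu.exists_left_inv with ⟨v, hv⟩
      exact ⟨v, by rw [ha_def, mul_comm u π, mul_assoc, mul_comm u v, hv, mul_one]⟩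
    rcases hr2.trans haX with ⟨s, hs⟩
    rcases hπ.irreducible.isUnit_or_isUnit hs with h | h
    · exact h
    · exfalso
      apply hXc
      refine dvd_trans ?_ hr0
      rcases h.exists_left_inv with ⟨v, hv⟩
      exact ⟨v, by rw [hs, mul_assoc, mul_comm s v, hv, mul_one]⟩
  -- Gauss lemma
  letI : NormalizationMonoid R := UniqueFactorizationMonoid.normalizationMonoid.toNormalizationMonoid
  letI : NormalizedGCDMonoid R := UniqueFactorizationMonoid.toNormalizedGCDMonoid R
  set K := FractionRing R
  rw [hq_prim.irreducible_iff_irreducible_map_fraction_map (K := K)]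
  set φ := algebraMap R K with hφ
  have hφinj : Function.Injective φ := IsFractionRing.injective R K
  have haK : φ a ≠ 0 := fun h => ha (hφinj (by simpa using h))
  have hcK : φ c ≠ 0 := fun h => hc (hφinj (by simpa using h))
  haveI : CharP K 2 := charP_of_injective_ringHom (f := φ) hφinj 2
  set b : K := φ c / φ a with hb_def
  have hb : ∀ r : K, r ^ 2 ≠ b := by
    intro r hr
    have hrel := IsFractionRing.num_den_reduced R r
    set p : R := IsFractionRing.num R r with hp_def
    set d : R := (IsFractionRing.den R r : R) with hd_def
    have hd0 : φ d ≠ 0 :=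
      IsFractionRing.to_map_ne_zero_of_mem_nonZeroDivisors (IsFractionRing.den R r).2
    have hrpd : r = φ p / φ d := (IsFractionRing.mk'_num_den' R r).symm
    have key : p ^ 2 * a = c * d ^ 2 := by
      apply hφinj
      rw [hrpd, hb_def] at hr
      rw [div_pow, div_eq_div_iff (pow_ne_zero 2 hd0) haK] at hr
      rw [map_mul, map_mul, map_pow, map_pow]
      linear_combination hr
    have hXd : π ∣ d := by
      have h1 : π ∣ c * d ^ 2 := by
        rw [← key, ha_def]; exact ⟨p ^ 2 * u, by ring⟩
      rcases hπ.2.2 _ _ h1 with h | h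
      · exact absurd h hXc
      · exact hπ.dvd_of_dvd_pow h
    rcases hXd with ⟨d', hd'⟩
    have key2 : p ^ 2 * u = c * π * d' ^ 2 := by
      apply mul_left_cancel₀ hπ.ne_zero
      rw [ha_def, hd'] at key
      linear_combination key
    have hXp : π ∣ p := by
      have h2 : π ∣ p ^ 2 := by
        rcases hu.exists_right_inv with ⟨v, hv⟩
        exact ⟨c * d' ^ 2 * v, by
          have : p ^ 2 * u * v = c * π * d' ^ 2 * v := by rw [key2]
          calc p ^ 2 = p ^ 2 * (u * v) := by rw [hv, mul_one]
            _ = c * π * d' ^ 2 * v := by rw [← mul_assoc, this]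
            _ = π * (c * d' ^ 2 * v) := by ring⟩
      exact hπ.dvd_of_dvd_pow h2
    exact hπ.not_isUnit (hrel hXp ⟨d', hd'⟩)
  have hirr : Irreducible (Polynomial.X ^ 2 - Polynomial.C b) :=
    X_pow_sub_C_irreducible_of_prime Nat.prime_two hb
  have hassoc : (Polynomial.C a * Polynomial.X ^ 2 + Polynomial.C c).map φ
      = Polynomial.C (φ a) * (Polynomial.X ^ 2 - Polynomial.C b) := by
    have h2 : (φ a) * b = φ c := by rw [hb_def, mul_comm, div_mul_cancel₀ _ haK]
    rw [Polynomial.map_add, Polynomial.map_mul, Polynomial.map_pow, Polynomial.map_C,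
      Polynomial.map_C, Polynomial.map_X]
    rw [mul_sub, ← Polynomial.C_mul, h2, sub_eq_add_neg, CharTwo.neg_eq]
  rw [hassoc]
  exact ((associated_unit_mul_left _ _
    (Polynomial.isUnit_C.mpr (isUnit_iff_ne_zero.mpr haK))).symm).irreducible hirr

/-- Let `F` be a field of characteristic `2` and `t₁, t₂ ∈ F` nonzero.  Then the
polynomial `y₁³ + t₁x₁²y₁ + y₂³ + t₂x₂²y₂` is irreducible in `F[x₁, x₂, y₁, y₂]`.
Here `x₁ = X 0`, `x₂ = X 1`, `y₁ = X 2`, `y₂ = X 3`. -/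
theorem stmt_18 (F : Type*) [Field F] [CharP F 2] (t₁ t₂ : F) (h₁ : t₁ ≠ 0) (h₂ : t₂ ≠ 0) :
    Irreducible ((X 2 : MvPolynomial (Fin 4) F) ^ 3 + C t₁ * X 0 ^ 2 * X 2 +
      X 3 ^ 3 + C t₂ * X 1 ^ 2 * X 3) := by
  rw [← MulEquiv.irreducible_iff (finSuccEquiv F 3).toMulEquiv]
  have himg : (finSuccEquiv F 3).toMulEquiv ((X 2 : MvPolynomial (Fin 4) F) ^ 3
        + C t₁ * X 0 ^ 2 * X 2 + X 3 ^ 3 + C t₂ * X 1 ^ 2 * X 3) =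
      Polynomial.C (C t₁ * X 1 : MvPolynomial (Fin 3) F) * Polynomial.X ^ 2
        + Polynomial.C (X 1 ^ 3 + X 2 ^ 3 + C t₂ * X 0 ^ 2 * X 2 : MvPolynomial (Fin 3) F) := by
    show (finSuccEquiv F 3) _ = _
    have h1 : (finSuccEquiv F 3) (X 1) = Polynomial.C (X 0) := by
      have : (1 : Fin 4) = Fin.succ 0 := rfl
      rw [this, finSuccEquiv_X_succ]
    have h2 : (finSuccEquiv F 3) (X 2) = Polynomial.C (X 1) := by
      have : (2 : Fin 4) = Fin.succ 1 := rfl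
      rw [this, finSuccEquiv_X_succ]
    have h3 : (finSuccEquiv F 3) (X 3) = Polynomial.C (X 2) := by
      have : (3 : Fin 4) = Fin.succ 2 := rfl
      rw [this, finSuccEquiv_X_succ]
    have hC : ∀ t : F, (finSuccEquiv F 3) (C t) = Polynomial.C (C t) := fun t => by
      simp [finSuccEquiv_apply]
    simp only [map_add, map_mul, map_pow, finSuccEquiv_X_zero, h1, h2, h3, hC,
      Polynomial.C_mul, Polynomial.C_pow, Polynomial.C_add]
    ring
  rw [himg]
  haveI : CharP (MvPolynomial (Fin 3) F) 2 :=
    charP_of_injective_ringHom (f := (MvPolynomial.C : F →+* MvPolynomial (Fin 3) F))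
      (MvPolynomial.C_injective _ _) 2
  refine quad_irred (u := C t₁) (π := X 1)
    ((isUnit_iff_ne_zero.mpr h₁).map C) (myPrimeX F 1) rfl ?_ ?_
  · intro ⟨d, hd⟩
    have := congrArg (eval (fun i : Fin 3 => if i = 2 then (1 : F) else 0)) hd
    simp at this
  · intro h
    have := congrArg (eval (fun i : Fin 3 => if i = 2 then (1 : F) else 0)) h
    simp at this
end
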